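/- Let p : ℝ² → ℝ⁴ have polynomial components of total degree at most n, let D = (d_{j,k}) satisfy B_j^m(p(s,t)) = Σ_{|k|=mn} d_{j,k} B_k^{mn}(s,t) for all (s,t) ∈ ℝ² and all |j| = m, and let A be the Gram matrix with entries a_{k,k'} = ∫_Ω B_k^{mn} B_{k'}^{mn} ds dt. If λ_min > 0 denotes the smallest eigenvalue of the (positive definite) symmetric matrix A, then for every coefficient vector b, sup_{(s,t)∈Ω} |q_b(p(s,t))| ≤ (1/√λ_min) · √(∫_Ω (q_b(p(s,t)))² ds dt), where q_b(u) = Σ_{|j|=m} b_j B_j^m(u). That is, the pointwise algebraic error is controlled by the weak (L²) algebraic error. -/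

import Mathlib

open MeasureTheory Finset

/-- The multinomial coefficient `n! / ∏ l, (i l)!` as a real number. -/
noncomputable def mcoef {L : ℕ} (n : ℕ) (i : Fin L → ℕ) : ℝ :=
  (n.factorial : ℝ) / ∏ l, ((i l).factorial : ℝ)

/-- The Bernstein basis polynomial of degree `n` for the multi-index `i`,
as a function of barycentric coordinates `β : Fin L → ℝ`. -/
noncomputable def bern {L : ℕ} (n : ℕ) (i : Fin L → ℕ) (β : Fin L → ℝ) : ℝ :=
  mcoef n i * ∏ l, β l ^ i l

/-- The triangular Bernstein basis polynomial of degree `n` for a multi-index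
`i : Fin 3 → ℕ`, as a function on `ℝ²`. -/
noncomputable def triBern (n : ℕ) (i : Fin 3 → ℕ) (x : ℝ × ℝ) : ℝ :=
  mcoef n i * (x.1 ^ i 0 * x.2 ^ i 1 * (1 - x.1 - x.2) ^ i 2)

/-- The tetrahedral Bernstein basis polynomial of degree `m` for a multi-index
`j : Fin 4 → ℕ`, as a function on `ℝ⁴`. -/
noncomputable def tetBern (m : ℕ) (j : Fin 4 → ℕ) (u : Fin 4 → ℝ) : ℝ :=
  mcoef m j * ∏ l, u l ^ j l

/-- The standard triangle `Ω = {(s,t) : 0 ≤ s, 0 ≤ t, s + t ≤ 1}` in `ℝ²`. -/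
def Omega : Set (ℝ × ℝ) := {x | 0 ≤ x.1 ∧ 0 ≤ x.2 ∧ x.1 + x.2 ≤ 1}

/-- `p : ℝ² → ℝ⁴` has components that are real polynomials in `(s,t)` of
total degree at most `n`. -/
def PolyComponents (n : ℕ) (p : ℝ × ℝ → Fin 4 → ℝ) : Prop :=
  ∀ l : Fin 4, ∃ P : MvPolynomial (Fin 2) ℝ, P.totalDegree ≤ n ∧
    ∀ x : ℝ × ℝ, p x l = MvPolynomial.eval ![x.1, x.2] P

/- ----------------- auxiliary lemmas ----------------- -/

lemma mcoef_eq {L : ℕ} {N : ℕ} {k : Fin L → ℕ} (h : ∑ l, k l = N) :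
    mcoef N k = (Nat.multinomial Finset.univ k : ℝ) := by
  have h0 : (∏ l, ((k l).factorial : ℝ)) ≠ 0 := by positivity
  rw [mcoef, div_eq_iff h0, ← h]
  have := Nat.multinomial_spec (Finset.univ : Finset (Fin L)) k
  push_cast [← this]
  ring

lemma triBern_sum (N : ℕ) (x : ℝ × ℝ) :
    ∑ k ∈ Finset.Nat.antidiagonalTuple 3 N, triBern N k x = 1 := by
  rw [← Finset.piAntidiag_univ_fin_eq_antidiagonalTuple]
  have := Finset.sum_pow_eq_sum_piAntidiag (Finset.univ : Finset (Fin 3))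
    ![x.1, x.2, 1 - x.1 - x.2] N
  rw [Fin.sum_univ_three] at this
  simp only [Matrix.cons_val_zero, Matrix.cons_val_one, Matrix.head_cons,
    Matrix.cons_val_two, Matrix.tail_cons] at this
  have hx : x.1 + x.2 + (1 - x.1 - x.2) = 1 := by ring
  rw [hx, one_pow] at this
  rw [this]
  refine Finset.sum_congr rfl fun k hk => ?_
  rw [Finset.mem_piAntidiag] at hk
  rw [triBern, mcoef_eq hk.1, Fin.prod_univ_three]
  simp [Nat.multinomial, mul_assoc]

lemma triBern_continuous (N : ℕ) (k : Fin 3 → ℕ) : Continuous (triBern N k) := by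
  unfold triBern
  fun_prop

lemma Omega_compact : IsCompact Omega := by
  have hsub : Omega ⊆ Set.Icc ((0:ℝ),(0:ℝ)) (1,1) := by
    rintro ⟨s,t⟩ ⟨h1,h2,h3⟩
    refine ⟨⟨h1, h2⟩, ?_, ?_⟩
    · simp only at *; linarith
    · simp only at *; linarith
  refine (isCompact_Icc).of_isClosed_subset ?_ hsub
  have c1 : IsClosed {x : ℝ × ℝ | 0 ≤ x.1} := isClosed_le continuous_const continuous_fst
  have c2 : IsClosed {x : ℝ × ℝ | 0 ≤ x.2} := isClosed_le continuous_const continuous_snd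
  have c3 : IsClosed {x : ℝ × ℝ | x.1 + x.2 ≤ 1} :=
    isClosed_le (continuous_fst.add continuous_snd) continuous_const
  exact (c1.inter (c2.inter c3))

lemma triBern_nonneg {N : ℕ} {k : Fin 3 → ℕ} {x : ℝ × ℝ} (hx : x ∈ Omega) :
    0 ≤ triBern N k x := by
  obtain ⟨h1, h2, h3⟩ := hx
  have : (0:ℝ) ≤ 1 - x.1 - x.2 := by linarith
  unfold triBern mcoef
  positivity

lemma integ_mul (N : ℕ) (k k' : Fin 3 → ℕ) :
    IntegrableOn (fun x => triBern N k x * triBern N k' x) Omega := by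
  exact ContinuousOn.integrableOn_compact Omega_compact
    ((triBern_continuous N k).mul (triBern_continuous N k')).continuousOn

lemma quad_ge (ι : Type) [Fintype ι] [DecidableEq ι] [Nonempty ι] (A : Matrix ι ι ℝ)
    (hsym : ∀ i j, A i j = A j i) (lam : ℝ)
    (hlb : ∀ μ : ℝ, ∀ v : ι → ℝ, v ≠ 0 → (∀ i, ∑ i', A i i' * v i' = μ * v i) → lam ≤ μ)
    (c : ι → ℝ) :
    lam * ∑ i, c i ^ 2 ≤ ∑ i, ∑ i', A i i' * c i' * c i := by
  by_cases hc : c = 0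
  · simp [hc]
  · set E := EuclideanSpace ℝ ι
    set T : E →ₗ[ℝ] E := Matrix.toEuclideanLin A with hTdef
    have hTapp : ∀ (x : E) (i : ι), T x i = ∑ i', A i i' * x i' := by
      intro x i
      rfl
    have hinner : ∀ x y : E, (inner ℝ x y : ℝ) = ∑ i, x i * y i := by
      intro x y
      rw [PiLp.inner_apply]
      exact Finset.sum_congr rfl fun i _ => by simp [mul_comm]
    have hT : T.IsSymmetric := by
      intro x y
      rw [hinner, hinner]
      simp only [hTapp, Finset.sum_mul, Finset.mul_sum]
      rw [Finset.sum_comm]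
      refine Finset.sum_congr rfl fun i _ => Finset.sum_congr rfl fun j _ => ?_
      rw [hsym]; ring
    haveI : Nontrivial E := inferInstance
    set μ₀ : ℝ := ⨅ x : { x : E // x ≠ 0 }, (RCLike.re (inner ℝ (T x) (x : E) : ℝ)) / ‖(x : E)‖ ^ 2
      with hμ₀
    have heig := hT.hasEigenvalue_iInf_of_finiteDimensional
    obtain ⟨v, hv⟩ := heig.exists_hasEigenvector
    have hv0 : v ≠ 0 := hv.2
    have hveq : ∀ i, ∑ i', A i i' * v i' = μ₀ * v i := by
      intro i
      have h2 := congrFun (congrArg (fun (z : E) => (z : ι → ℝ)) hv.apply_eq_smul) i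
      rw [← hTapp v i, h2]
      simp [μ₀]
      rfl
    have hlam : lam ≤ μ₀ := hlb μ₀ v (by simpa using hv0) hveq
    set Tc := LinearMap.toContinuousLinearMap T with hTc
    have hbdd : BddBelow (Set.range fun x : { x : E // x ≠ 0 } =>
        (RCLike.re (inner ℝ (T x) (x : E) : ℝ)) / ‖(x : E)‖ ^ 2) := by
      refine ⟨-‖Tc‖, ?_⟩
      rintro _ ⟨x, rfl⟩
      have hx : (0:ℝ) < ‖(x : E)‖ ^ 2 := by
        have := norm_pos_iff.mpr x.2
        positivity
      dsimp only
      rw [le_div_iff₀ hx]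
      have h1 : |(inner ℝ (T x) (x : E) : ℝ)| ≤ ‖T (x : E)‖ * ‖(x : E)‖ :=
        abs_real_inner_le_norm _ _
      have h2 : ‖T (x : E)‖ ≤ ‖Tc‖ * ‖(x : E)‖ := Tc.le_opNorm _
      have h3 : -(‖Tc‖ * ‖(x:E)‖ ^ 2) ≤ (inner ℝ (T x) (x : E) : ℝ) := by
        nlinarith [abs_nonneg (inner ℝ (T ↑x) (x : E) : ℝ), neg_abs_le (inner ℝ (T ↑x) (x : E) : ℝ),
          norm_nonneg (x : E), norm_nonneg (T (x : E))]
      have hre2 : RCLike.re (inner ℝ (T (x : E)) (x : E) : ℝ) = (inner ℝ (T (x : E)) (x : E) : ℝ) := rfl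
      rw [hre2]
      linarith [h3]
    have hcle : μ₀ ≤ (RCLike.re (inner ℝ (T ((WithLp.equiv 2 (ι → ℝ)).symm c))
        ((WithLp.equiv 2 (ι → ℝ)).symm c) : ℝ)) / ‖((WithLp.equiv 2 (ι → ℝ)).symm c : E)‖ ^ 2 := by
      have hc' : ((WithLp.equiv 2 (ι → ℝ)).symm c : E) ≠ 0 := by
        intro h
        exact hc (by simpa using congrArg (WithLp.equiv 2 (ι → ℝ)) h)
      exact ciInf_le hbdd ⟨_, hc'⟩
    set cE : E := (WithLp.equiv 2 (ι → ℝ)).symm c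
    have hnorm : ‖cE‖ ^ 2 = ∑ i, c i ^ 2 := by
      rw [EuclideanSpace.norm_eq]
      rw [Real.sq_sqrt (by positivity)]
      refine Finset.sum_congr rfl fun i _ => by
        simp only [Real.norm_eq_abs, sq_abs]; rfl
    have hquad : (inner ℝ (T cE) cE : ℝ) = ∑ i, ∑ i', A i i' * c i' * c i := by
      rw [hinner]
      refine Finset.sum_congr rfl fun i _ => ?_
      rw [hTapp, Finset.sum_mul]
      rfl
    have hre : (RCLike.re (inner ℝ (T cE) cE : ℝ)) = (inner ℝ (T cE) cE : ℝ) := rfl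
    rw [hre, hquad, hnorm] at hcle
    have hpos : (0:ℝ) < ∑ i, c i ^ 2 := by
      rw [← hnorm]
      have := norm_pos_iff.mpr (show cE ≠ 0 by
        intro h; exact hc (by simpa [cE] using congrArg (WithLp.equiv 2 (ι → ℝ)) h))
      positivity
    have hfin := le_trans hlam hcle
    rw [le_div_iff₀ hpos] at hfin
    linarith


/-- the pointwise algebraic error on `Ω` is controlled by the
weak (L²) algebraic error, via the smallest eigenvalue `λ_min > 0` of the Gram
matrix `A`. -/
theorem pointwise_le_weak (n m : ℕ) (p : ℝ × ℝ → Fin 4 → ℝ)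
    (hp : PolyComponents n p) (d : (Fin 4 → ℕ) → (Fin 3 → ℕ) → ℝ)
    (hD : ∀ j ∈ Finset.Nat.antidiagonalTuple 4 m, ∀ x : ℝ × ℝ,
      tetBern m j (p x) =
        ∑ k ∈ Finset.Nat.antidiagonalTuple 3 (m * n), d j k * triBern (m * n) k x)
    (lam : ℝ) (hpos : 0 < lam)
    (hlam : IsLeast {μ : ℝ | ∃ c : (Fin 3 → ℕ) → ℝ,
      (∃ k ∈ Finset.Nat.antidiagonalTuple 3 (m * n), c k ≠ 0) ∧
      ∀ k ∈ Finset.Nat.antidiagonalTuple 3 (m * n),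
        ∑ k' ∈ Finset.Nat.antidiagonalTuple 3 (m * n),
          (∫ x in Omega, triBern (m * n) k x * triBern (m * n) k' x) * c k' = μ * c k}
      lam)
    (b : (Fin 4 → ℕ) → ℝ) :
    ∀ x ∈ Omega,
      |∑ j ∈ Finset.Nat.antidiagonalTuple 4 m, b j * tetBern m j (p x)| ≤
        (1 / Real.sqrt lam) * Real.sqrt (∫ x in Omega,
          (∑ j ∈ Finset.Nat.antidiagonalTuple 4 m, b j * tetBern m j (p x)) ^ 2) := by
  intro x hx
  set N := m * n with hN
  set S := Finset.Nat.antidiagonalTuple 3 N with hS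
  set T4 := Finset.Nat.antidiagonalTuple 4 m with hT4
  set c : (Fin 3 → ℕ) → ℝ := fun k => ∑ j ∈ T4, b j * d j k with hcdef
  set q : ℝ × ℝ → ℝ := fun y => ∑ j ∈ T4, b j * tetBern m j (p y) with hqdef
  have hq : ∀ y, q y = ∑ k ∈ S, c k * triBern N k y := by
    intro y
    rw [hqdef]
    dsimp only
    rw [Finset.sum_congr rfl fun j hj => by rw [hD j hj y]]
    simp_rw [Finset.mul_sum]
    rw [Finset.sum_comm]
    refine Finset.sum_congr rfl fun k _ => ?_
    rw [hcdef]
    dsimp only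
    rw [Finset.sum_mul]
    exact Finset.sum_congr rfl fun j _ => by ring
  -- pointwise bound
  have hptw : |q x| ≤ Real.sqrt (∑ k ∈ S, c k ^ 2) := by
    rw [hq x]
    calc |∑ k ∈ S, c k * triBern N k x|
        ≤ ∑ k ∈ S, |c k * triBern N k x| := Finset.abs_sum_le_sum_abs _ _
      _ = ∑ k ∈ S, |c k| * triBern N k x := by
          refine Finset.sum_congr rfl fun k _ => ?_
          rw [abs_mul, abs_of_nonneg (triBern_nonneg hx)]
      _ ≤ ∑ k ∈ S, Real.sqrt (∑ k' ∈ S, c k' ^ 2) * triBern N k x := by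
          refine Finset.sum_le_sum fun k hk => ?_
          refine mul_le_mul_of_nonneg_right ?_ (triBern_nonneg hx)
          rw [← Real.sqrt_sq_eq_abs]
          exact Real.sqrt_le_sqrt (Finset.single_le_sum (fun i _ => sq_nonneg (c i)) hk)
      _ = Real.sqrt (∑ k' ∈ S, c k' ^ 2) := by
          rw [← Finset.mul_sum, triBern_sum, mul_one]
  -- integral identity
  have hsq : ∀ y : ℝ × ℝ, q y ^ 2 =
      ∑ k ∈ S, ∑ k' ∈ S, (c k * c k') * (triBern N k y * triBern N k' y) := by
    intro y
    rw [hq y, sq, Finset.sum_mul_sum]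
    exact Finset.sum_congr rfl fun k _ => Finset.sum_congr rfl fun k' _ => by ring
  have hint : (∫ y in Omega, q y ^ 2) =
      ∑ k ∈ S, ∑ k' ∈ S, (∫ y in Omega, triBern N k y * triBern N k' y) * c k' * c k := by
    rw [MeasureTheory.setIntegral_congr_fun Omega_compact.isClosed.measurableSet
      (fun y _ => hsq y)]
    rw [MeasureTheory.integral_finset_sum S (fun k _ => ?_)]
    · refine Finset.sum_congr rfl fun k _ => ?_
      rw [MeasureTheory.integral_finset_sum S (fun k' _ => ?_)]
      · refine Finset.sum_congr rfl fun k' _ => ?_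
        rw [MeasureTheory.integral_const_mul]
        ring
      · exact (integ_mul N k k').const_mul _
    · exact integrable_finset_sum S (fun k' _ => (integ_mul N k k').const_mul _)
  -- spectral bound
  have hSne : (fun l : Fin 3 => if l = 0 then N else 0) ∈ S := by
    rw [hS, Finset.Nat.mem_antidiagonalTuple]
    simp [Fin.sum_univ_three]
  haveI : Nonempty {k // k ∈ S} := ⟨⟨_, hSne⟩⟩
  have hspec : lam * ∑ k ∈ S, c k ^ 2 ≤
      ∑ k ∈ S, ∑ k' ∈ S, (∫ y in Omega, triBern N k y * triBern N k' y) * c k' * c k := by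
    have := quad_ge {k // k ∈ S}
      (fun i i' => ∫ y in Omega, triBern N i.1 y * triBern N i'.1 y)
      (fun i j => by
        have hcm : ∀ y : ℝ × ℝ, triBern N i.1 y * triBern N j.1 y
            = triBern N j.1 y * triBern N i.1 y := fun y => mul_comm _ _
        simp_rw [hcm])
      lam
      (fun μ v hv0 hveq => by
        refine hlam.2 ?_
        refine ⟨fun k => if h : k ∈ S then v ⟨k, h⟩ else 0, ?_, ?_⟩
        · obtain ⟨i, hi⟩ := Function.ne_iff.mp hv0
          exact ⟨i.1, i.2, by simpa [i.2] using hi⟩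
        · intro k hk
          have h := hveq ⟨k, hk⟩
          rw [← Finset.sum_coe_sort S]
          simp only [dif_pos hk]
          rw [← h]
          refine Finset.sum_congr rfl fun i _ => ?_
          simp [i.2])
      (fun i => c i.1)
    have hconv : (∑ i : {k // k ∈ S}, ∑ i' : {k // k ∈ S},
        (∫ y in Omega, triBern N i.1 y * triBern N i'.1 y) * c i'.1 * c i.1)
        = ∑ k ∈ S, ∑ k' ∈ S, (∫ y in Omega, triBern N k y * triBern N k' y) * c k' * c k := by
      rw [← Finset.sum_coe_sort S (fun k => ∑ k' ∈ S,
        (∫ y in Omega, triBern N k y * triBern N k' y) * c k' * c k)]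
      exact Finset.sum_congr rfl fun i _ => Finset.sum_coe_sort S
        (fun k' => (∫ y in Omega, triBern N i.1 y * triBern N k' y) * c k' * c i.1)
    rw [Finset.sum_coe_sort S (fun k => c k ^ 2), hconv] at this
    exact this
  rw [← hint] at hspec
  -- conclusion
  have hInn : (0:ℝ) ≤ ∫ y in Omega, q y ^ 2 := by
    have h0 : (0:ℝ) ≤ ∑ k ∈ S, c k ^ 2 := Finset.sum_nonneg fun k _ => sq_nonneg _
    nlinarith
  have hle2 : ∑ k ∈ S, c k ^ 2 ≤ (∫ y in Omega, q y ^ 2) / lam := by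
    rw [le_div_iff₀ hpos]
    linarith
  calc |q x| ≤ Real.sqrt (∑ k ∈ S, c k ^ 2) := hptw
    _ ≤ Real.sqrt ((∫ y in Omega, q y ^ 2) / lam) := Real.sqrt_le_sqrt hle2
    _ = (1 / Real.sqrt lam) * Real.sqrt (∫ y in Omega, q y ^ 2) := by
        rw [Real.sqrt_div hInn, div_eq_mul_inv, one_div, mul_comm]
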